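/- arXiv:2202.13977 — 2 statements merged into one kernel-verified Lean document; each statement's English description precedes it below -/
import Mathlib

section
/- The Paley tournament P_7 does not have the strong EH-property. -/
/-- A tournament on vertex set `Fin n`. -/
structure Tournament (n : ℕ) where
  adj : Fin n → Fin n → Prop
  irrefl : ∀ v, ¬ adj v v
  total : ∀ u v : Fin n, u ≠ v → (adj u v ↔ ¬ adj v u)

namespace Tournament

/-- `G` contains `H` as a subtournament. -/
def Contains {n m : ℕ} (G : Tournament n) (H : Tournament m) : Prop :=
  ∃ f : Fin m → Fin n, Function.Injective f ∧ ∀ u v, H.adj u v ↔ G.adj (f u) (f v)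

/-- `G` has a pure pair of order at least `t`. -/
def HasPurePair {n : ℕ} (G : Tournament n) (t : ℝ) : Prop :=
  ∃ A B : Finset (Fin n), Disjoint A B ∧ (∀ a ∈ A, ∀ b ∈ B, G.adj a b) ∧
    t ≤ A.card ∧ t ≤ B.card

/-- The strong Erdős–Hajnal property for a tournament. -/
def StrongEH {m : ℕ} (H : Tournament m) : Prop :=
  ∃ c : ℝ, 0 < c ∧ ∀ (n : ℕ) (G : Tournament n), ¬ G.Contains H → 1 < n →
    G.HasPurePair (c * n)

/-- The reverse tournament: all edges reversed. -/
def rev {n : ℕ} (G : Tournament n) : Tournament n where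
  adj i j := G.adj j i
  irrefl v := G.irrefl v
  total u v h := by have := G.total v u (Ne.symm h); tauto

/-- Isomorphism of tournaments. -/
def Iso {n m : ℕ} (G : Tournament n) (H : Tournament m) : Prop :=
  ∃ e : Fin n ≃ Fin m, ∀ u v, G.adj u v ↔ H.adj (e u) (e v)

/-- The backedge graph of `H` under the numbering `σ`: position `i` carries the vertex `σ i`,
and positions `i < j` are adjacent iff the vertex `σ i` is adjacent from `σ j` in `H`. -/
def backedge {m : ℕ} (H : Tournament m) (σ : Equiv.Perm (Fin m)) :
    SimpleGraph (Fin m) where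
  Adj i j := (i < j ∧ H.adj (σ j) (σ i)) ∨ (j < i ∧ H.adj (σ i) (σ j))
  symm := ⟨by intro i j h; tauto⟩
  loopless := ⟨by intro i h; rcases h with ⟨h, _⟩ | ⟨h, _⟩ <;> exact absurd h (lt_irrefl i)⟩

/-- The number of backedges of the numbering `σ` of `H`
(the number of edges of the backedge graph). -/
noncomputable def backCount {m : ℕ} (H : Tournament m) (σ : Equiv.Perm (Fin m)) : ℕ :=
  Nat.card {p : Fin m × Fin m | p.1 < p.2 ∧ H.adj (σ p.2) (σ p.1)}

end Tournament
/-- The Paley tournament `P₇` on `{0,…,6}`: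
`j` is adjacent from `i` iff `j - i ≡ 1, 2, 4 (mod 7)`. -/
def P7 : Tournament 7 where
  adj i j := (j.val + 7 - i.val) % 7 = 1 ∨ (j.val + 7 - i.val) % 7 = 2 ∨
    (j.val + 7 - i.val) % 7 = 4
  irrefl := by decide
  total := by decide

set_option maxRecDepth 10000
set_option maxHeartbeats 4000000
set_option synthInstance.maxSize 2000
set_option synthInstance.maxHeartbeats 1000000

namespace P7NSEH

def padj : Fin 7 → Fin 7 → Bool := fun i j =>
  (j.val + 7 - i.val) % 7 == 1 || (j.val + 7 - i.val) % 7 == 2 || (j.val + 7 - i.val) % 7 == 4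

theorem key : ∀ w1 : Fin 7, (w1 = 1 ∨ w1 = 3) →
    ∀ w2, (w2 ≠ 0 ∧ w2 ≠ w1) →
    ∀ w3, (w3 ≠ 0 ∧ w3 ≠ w1 ∧ w3 ≠ w2) →
    ∀ w4, (w4 ≠ 0 ∧ w4 ≠ w1 ∧ w4 ≠ w2 ∧ w4 ≠ w3) →
    ∀ w5, (w5 ≠ 0 ∧ w5 ≠ w1 ∧ w5 ≠ w2 ∧ w5 ≠ w3 ∧ w5 ≠ w4) →
    ∀ w6, (w6 ≠ 0 ∧ w6 ≠ w1 ∧ w6 ≠ w2 ∧ w6 ≠ w3 ∧ w6 ≠ w4 ∧ w6 ≠ w5) →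
    ∃ i j k : Fin 7, i < j ∧ j < k ∧
      (padj (![0,w1,w2,w3,w4,w5,w6] j) (![0,w1,w2,w3,w4,w5,w6] i)
      && padj (![0,w1,w2,w3,w4,w5,w6] k) (![0,w1,w2,w3,w4,w5,w6] j)
      && padj (![0,w1,w2,w3,w4,w5,w6] k) (![0,w1,w2,w3,w4,w5,w6] i)) = true := by decide

lemma exists_mult : ∀ d : Fin 7, d ≠ 0 → ∃ e : Fin 7,
    (e = 1 ∨ e = 2 ∨ e = 4) ∧ (e * d = 1 ∨ e * d = 3) := by decide

lemma mul_inj : ∀ e : Fin 7, (e = 1 ∨ e = 2 ∨ e = 4) → ∀ x y : Fin 7, e * x = e * y → x = y := by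
  decide

lemma padj_inv : ∀ e : Fin 7, (e = 1 ∨ e = 2 ∨ e = 4) → ∀ t x y : Fin 7,
    padj (e * (x - t)) (e * (y - t)) = padj x y := by decide

lemma tri (w : Fin 7 → Fin 7) (hw : Function.Injective w) :
    ∃ i j k : Fin 7, i < j ∧ j < k ∧
      padj (w j) (w i) = true ∧ padj (w k) (w j) = true ∧ padj (w k) (w i) = true := by
  obtain ⟨e, he, hed⟩ := exists_mult (w 1 - w 0) (sub_ne_zero.mpr (fun h => by
    exact absurd (hw h) (by decide)))
  set u : Fin 7 → Fin 7 := fun p => e * (w p - w 0) with hu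
  have hui : Function.Injective u := by
    intro p q h
    exact hw (by have := mul_inj e he _ _ h; exact sub_left_injective this)
  have hu0 : u 0 = 0 := by simp [hu]
  have hne : ∀ p q : Fin 7, p ≠ q → u p ≠ u q := fun p q h hc => h (hui hc)
  have h1 : u 1 = 1 ∨ u 1 = 3 := hed
  obtain ⟨i, j, k, hij, hjk, hc⟩ := key (u 1) h1 (u 2)
    ⟨by rw [← hu0]; exact hne 2 0 (by decide), hne 2 1 (by decide)⟩ (u 3)
    ⟨by rw [← hu0]; exact hne 3 0 (by decide), hne 3 1 (by decide), hne 3 2 (by decide)⟩ (u 4)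
    ⟨by rw [← hu0]; exact hne 4 0 (by decide), hne 4 1 (by decide), hne 4 2 (by decide),
      hne 4 3 (by decide)⟩ (u 5)
    ⟨by rw [← hu0]; exact hne 5 0 (by decide), hne 5 1 (by decide), hne 5 2 (by decide),
      hne 5 3 (by decide), hne 5 4 (by decide)⟩ (u 6)
    ⟨by rw [← hu0]; exact hne 6 0 (by decide), hne 6 1 (by decide), hne 6 2 (by decide),
      hne 6 3 (by decide), hne 6 4 (by decide), hne 6 5 (by decide)⟩
  have hv : ∀ m : Fin 7, (![0, u 1, u 2, u 3, u 4, u 5, u 6]) m = u m := by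
    intro m
    fin_cases m
    · exact hu0.symm
    all_goals rfl
  rw [hv i, hv j, hv k] at hc
  simp only [Bool.and_eq_true] at hc
  obtain ⟨⟨h1', h2'⟩, h3'⟩ := hc
  refine ⟨i, j, k, hij, hjk, ?_, ?_, ?_⟩
  · rw [← padj_inv e he (w 0) (w j) (w i)]; exact h1'
  · rw [← padj_inv e he (w 0) (w k) (w j)]; exact h2'
  · rw [← padj_inv e he (w 0) (w k) (w i)]; exact h3'

lemma padj_iff : ∀ x y : Fin 7, P7.adj x y ↔ padj x y = true := by
  show ∀ x y : Fin 7, ((y.val + 7 - x.val) % 7 = 1 ∨ (y.val + 7 - x.val) % 7 = 2 ∨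
    (y.val + 7 - x.val) % 7 = 4) ↔ padj x y = true
  decide

lemma count_constraint {α : Type} [Fintype α] [DecidableEq α] {D : ℕ} (S : Finset α)
    (Q : Fin D → Prop) [DecidablePred Q] :
    (Finset.univ.filter fun F : α → Fin D => ∀ c ∈ S, Q (F c)).card
      = (Fintype.card {x : Fin D // Q x}) ^ S.card * D ^ (Fintype.card α - S.card) := by
  rw [← Fintype.card_subtype]
  have e : {F : α → Fin D // ∀ c ∈ S, Q (F c)} ≃
      ((S → {x : Fin D // Q x}) × (↥(Sᶜ : Finset α) → Fin D)) :=
    { toFun := fun F => (fun c => ⟨F.1 c.1, F.2 c.1 c.2⟩, fun c => F.1 c.1)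
      invFun := fun g => ⟨fun a => if h : a ∈ S then (g.1 ⟨a, h⟩).1
          else g.2 ⟨a, Finset.mem_compl.mpr h⟩, by
        intro c hc
        simp only [dif_pos hc]
        exact (g.1 ⟨c, hc⟩).2⟩
      left_inv := fun F => Subtype.ext (funext fun a => by by_cases h : a ∈ S <;> simp [h])
      right_inv := fun g => by
        refine Prod.ext (funext fun c => ?_) (funext fun c => ?_)
        · simp only [dif_pos c.2]
        · have hc : c.1 ∉ S := Finset.mem_compl.mp c.2
          simp only [dif_neg hc] }
  rw [Fintype.card_congr e, Fintype.card_prod, Fintype.card_fun, Fintype.card_fun]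
  rw [Fintype.card_coe, Fintype.card_coe, Finset.card_compl, Fintype.card_fin]

lemma card_ne_zero {D : ℕ} [NeZero D] : Fintype.card {x : Fin D // x ≠ 0} = D - 1 := by
  rw [Fintype.card_subtype_compl, Fintype.card_subtype_eq, Fintype.card_fin]

lemma card_eq_zero {D : ℕ} [NeZero D] : Fintype.card {x : Fin D // x = 0} = 1 :=
  Fintype.card_subtype_eq _


section Graph
variable {N D : ℕ} [NeZero D]
def Edg (F : Fin N × Fin N → Fin D) (x y : Fin N) : Prop :=
  x ≠ y ∧ (F (x, y) = 0 ∨ F (y, x) = 0)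
instance (F : Fin N × Fin N → Fin D) (x y : Fin N) : Decidable (Edg F x y) := by
  unfold Edg; infer_instance
lemma Edg_symm {F : Fin N × Fin N → Fin D} {x y : Fin N} (h : Edg F x y) : Edg F y x :=
  ⟨h.1.symm, h.2.symm⟩
def bad1 (β : ℕ) (F : Fin N × Fin N → Fin D) : Prop :=
  ∃ A B : Finset (Fin N), Disjoint A B ∧ A.card = β ∧ B.card = β ∧
    ∀ a ∈ A, ∀ b ∈ B, ¬ Edg F a b

instance (β : ℕ) : DecidablePred (bad1 (N := N) (D := D) β) := by
  unfold bad1; infer_instance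

def triset (F : Fin N × Fin N → Fin D) : Finset (Fin N × Fin N × Fin N) :=
  Finset.univ.filter fun t => t.1 ≠ t.2.1 ∧ t.2.1 ≠ t.2.2 ∧ t.1 ≠ t.2.2 ∧
    Edg F t.1 t.2.1 ∧ Edg F t.2.1 t.2.2 ∧ Edg F t.1 t.2.2

variable (F : Fin N × Fin N → Fin D) (R : Finset (Fin N)) {M : ℕ} (hM : R.card = M)

def tourn : Tournament M where
  adj a b := ((R.orderIsoOfFin hM a : Fin N) < R.orderIsoOfFin hM b ∧
      ¬ Edg F (R.orderIsoOfFin hM a) (R.orderIsoOfFin hM b)) ∨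
    ((R.orderIsoOfFin hM b : Fin N) < R.orderIsoOfFin hM a ∧
      Edg F (R.orderIsoOfFin hM a) (R.orderIsoOfFin hM b))
  irrefl v := by simp
  total u v huv := by
    set x := (R.orderIsoOfFin hM u : Fin N)
    set y := (R.orderIsoOfFin hM v : Fin N)
    have hxy : x ≠ y := by
      intro h
      exact huv ((R.orderIsoOfFin hM).injective (Subtype.ext h))
    have hs : Edg F x y ↔ Edg F y x := ⟨Edg_symm, Edg_symm⟩
    rcases hxy.lt_or_gt with h | h
    · have h' : ¬ (y < x) := h.asymm
      tauto
    · have h' : ¬ (x < y) := h.asymm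
      tauto

lemma tourn_P7free
    (hTF : ∀ x y z : Fin N, x ∈ R → y ∈ R → z ∈ R → x ≠ y → y ≠ z → x ≠ z →
      Edg F x y → Edg F y z → Edg F x z → False) :
    ¬ (tourn F R hM).Contains P7 := by
  rintro ⟨f, hinj, hiff⟩
  set ι := R.orderIsoOfFin hM with hι
  set g : Fin 7 → Fin N := fun v => (ι (f v) : Fin N) with hg
  have ginj : Function.Injective g := by
    intro a b h
    exact hinj (ι.injective (Subtype.ext h))
  have hs : (Finset.univ.image g).card = 7 := by
    rw [Finset.card_image_of_injective _ ginj, Finset.card_univ, Fintype.card_fin]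
  set o := (Finset.univ.image g).orderIsoOfFin hs with ho
  set r : Fin 7 → Fin 7 := fun v => o.symm ⟨g v, Finset.mem_image_of_mem g (Finset.mem_univ v)⟩
    with hrdef
  have hr : ∀ x y : Fin 7, r x < r y ↔ g x < g y := by
    intro x y
    rw [hrdef]
    dsimp only
    rw [o.symm.lt_iff_lt, Subtype.mk_lt_mk]
  have rinj : Function.Injective r := by
    intro a b h
    have h2 := congrArg Subtype.val (o.symm.injective h)
    exact ginj h2
  have rbij := Finite.injective_iff_bijective.mp rinj
  set w := (Equiv.ofBijective r rbij).symm with hw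
  have hwr : ∀ i, r (w i) = i := fun i => (Equiv.ofBijective r rbij).apply_symm_apply i
  obtain ⟨i, j, k, hij, hjk, h1, h2, h3⟩ := tri w w.injective
  have hxy : g (w i) < g (w j) := by
    rw [← hr]
    rw [hwr, hwr]; exact hij
  have hyz : g (w j) < g (w k) := by
    rw [← hr]
    rw [hwr, hwr]; exact hjk
  have hxz : g (w i) < g (w k) := hxy.trans hyz
  have adj1 : Edg F (g (w j)) (g (w i)) := by
    have hp := (hiff (w j) (w i)).mp ((padj_iff _ _).mpr h1)
    rcases hp with ⟨hlt, -⟩ | ⟨-, hE⟩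
    · exact absurd hlt hxy.asymm
    · exact hE
  have adj2 : Edg F (g (w k)) (g (w j)) := by
    have hp := (hiff (w k) (w j)).mp ((padj_iff _ _).mpr h2)
    rcases hp with ⟨hlt, -⟩ | ⟨-, hE⟩
    · exact absurd hlt hyz.asymm
    · exact hE
  have adj3 : Edg F (g (w k)) (g (w i)) := by
    have hp := (hiff (w k) (w i)).mp ((padj_iff _ _).mpr h3)
    rcases hp with ⟨hlt, -⟩ | ⟨-, hE⟩
    · exact absurd hlt hxz.asymm
    · exact hE
  exact hTF (g (w k)) (g (w j)) (g (w i)) (Finset.coe_mem _) (Finset.coe_mem _)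
    (Finset.coe_mem _) hyz.ne' hxy.ne' hxz.ne' adj2 adj1 adj3

lemma tourn_nopure (β : ℕ) (hb1 : ¬ bad1 β F)
    (hTF : ∀ x y z : Fin N, x ∈ R → y ∈ R → z ∈ R → x ≠ y → y ≠ z → x ≠ z →
      Edg F x y → Edg F y z → Edg F x z → False)
    (A B : Finset (Fin M)) (hd : Disjoint A B)
    (hpure : ∀ a ∈ A, ∀ b ∈ B, (tourn F R hM).adj a b)
    (hA : 3 * β + 1 ≤ A.card) (hB : 3 * β + 1 ≤ B.card) : False := by
  classical
  set ι := R.orderIsoOfFin hM with hι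
  have hg1 : ∀ X Y : Finset (Fin N), Disjoint X Y → β ≤ X.card → β ≤ Y.card →
      ∃ x ∈ X, ∃ y ∈ Y, Edg F x y := by
    intro X Y hXY hX hY
    obtain ⟨X', hX', hX'c⟩ := Finset.exists_subset_card_eq hX
    obtain ⟨Y', hY', hY'c⟩ := Finset.exists_subset_card_eq hY
    by_contra hno
    push_neg at hno
    exact hb1 ⟨X', Y', hXY.mono hX' hY', hX'c, hY'c,
      fun a ha b hb => hno a (hX' ha) b (hY' hb)⟩
  have hAne : A.Nonempty := Finset.card_pos.mp (by omega)
  set a0 := A.max' hAne with ha0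
  have ha0A : a0 ∈ A := A.max'_mem hAne
  have hcoe_inj : Function.Injective (fun a : Fin M => (ι a : Fin N)) := by
    intro a b h
    exact ι.injective (Subtype.ext h)
  set Y := B.filter (fun b => (ι b : Fin N) < ι a0) with hY
  have hAB_ne : ∀ a ∈ A, ∀ b ∈ B, (ι a : Fin N) ≠ ι b := by
    intro a ha b hb h
    exact Finset.disjoint_left.mp hd ha (hcoe_inj h ▸ hb)
  have hEdge_to : ∀ b ∈ Y, Edg F (ι a0) (ι b) := by
    intro b hb
    obtain ⟨hbB, hblt⟩ := Finset.mem_filter.mp hb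
    have := hpure a0 ha0A b hbB
    rcases this with ⟨hlt, -⟩ | ⟨-, hE⟩
    · exact absurd hlt hblt.asymm
    · exact hE
  have hYcard : Y.card < 2 * β := by
    by_contra hYc
    push_neg at hYc
    set CY := Y.image (fun b => (ι b : Fin N)) with hCY
    have hCYc : CY.card = Y.card := Finset.card_image_of_injective _ hcoe_inj
    obtain ⟨C1, hC1, hC1c⟩ := Finset.exists_subset_card_eq
      (show β ≤ CY.card by omega)
    have h2 : β ≤ (CY \ C1).card := by
      rw [Finset.card_sdiff_of_subset hC1]
      omega
    obtain ⟨C2, hC2, hC2c⟩ := Finset.exists_subset_card_eq h2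
    obtain ⟨u, hu, v, hv, hE⟩ := hg1 C1 C2
      (Finset.disjoint_left.mpr (fun {x} hx hx2 => (Finset.mem_sdiff.mp (hC2 hx2)).2 hx))
      (le_of_eq hC1c.symm) (le_of_eq hC2c.symm)
    have huv : u ≠ v := by
      intro h
      exact (Finset.mem_sdiff.mp (hC2 hv)).2 (h ▸ hu)
    obtain ⟨b1, hb1Y, hb1e⟩ := Finset.mem_image.mp (hC1 hu)
    obtain ⟨b2, hb2Y, hb2e⟩ := Finset.mem_image.mp (hC2 hv |> Finset.mem_sdiff.mp |>.1)
    subst hb1e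
    subst hb2e
    have e1 : Edg F (ι a0) (ι b1) := hEdge_to b1 hb1Y
    have e2 : Edg F (ι a0) (ι b2) := hEdge_to b2 hb2Y
    exact hTF (ι a0) (ι b1) (ι b2) (Finset.coe_mem _) (Finset.coe_mem _) (Finset.coe_mem _)
      e1.1 huv e2.1 e1 hE e2
  set B' := B \ Y with hB'
  have hB'c : β ≤ B'.card := by
    rw [hB', Finset.card_sdiff_of_subset (Finset.filter_subset _ _), ← hY]
    omega
  have hnoedge : ∀ a ∈ A, ∀ b ∈ B', ¬ Edg F (ι a) (ι b) := by
    intro a ha b hb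
    obtain ⟨hbB, hbY⟩ := Finset.mem_sdiff.mp hb
    have hblt : ¬ ((ι b : Fin N) < ι a0) := fun h => hbY (Finset.mem_filter.mpr ⟨hbB, h⟩)
    have hb_gt : (ι a0 : Fin N) < ι b :=
      lt_of_le_of_ne (not_lt.mp hblt) (hAB_ne a0 ha0A b hbB)
    have ha_le : (ι a : Fin N) ≤ ι a0 := by
      have : a ≤ a0 := A.le_max' a ha
      exact Subtype.coe_le_coe.mpr (ι.monotone this)
    have halt : (ι a : Fin N) < ι b := lt_of_le_of_lt ha_le hb_gt
    have := hpure a ha b hbB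
    rcases this with ⟨-, hnE⟩ | ⟨hlt, -⟩
    · exact hnE
    · exact absurd hlt halt.asymm
  set CA := A.image (fun a => (ι a : Fin N)) with hCA
  set CB := B'.image (fun b => (ι b : Fin N)) with hCB
  have hCAc : β ≤ CA.card := by
    rw [hCA, Finset.card_image_of_injective _ hcoe_inj]; omega
  have hCBc : β ≤ CB.card := by
    rw [hCB, Finset.card_image_of_injective _ hcoe_inj]; omega
  have hdisj : Disjoint CA CB := by
    rw [Finset.disjoint_left]
    rintro x hx hx'
    obtain ⟨a, ha, hae⟩ := Finset.mem_image.mp hx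
    obtain ⟨b, hb, hbe⟩ := Finset.mem_image.mp hx'
    have : a = b := hcoe_inj (hae.trans hbe.symm)
    exact Finset.disjoint_left.mp hd ha (this ▸ (Finset.mem_sdiff.mp hb).1)
  obtain ⟨u, hu, v, hv, hE⟩ := hg1 CA CB hdisj hCAc hCBc
  obtain ⟨a, ha, hae⟩ := Finset.mem_image.mp hu
  obtain ⟨b, hb, hbe⟩ := Finset.mem_image.mp hv
  subst hae
  subst hbe
  exact hnoedge a ha b hb hE

lemma bad1_count (β : ℕ) :
    (Finset.univ.filter (bad1 (N := N) (D := D) β)).card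
      ≤ 2 ^ N * 2 ^ N * ((D - 1) ^ (2 * (β * β)) * D ^ (N * N - 2 * (β * β))) := by
  classical
  set P : Finset (Finset (Fin N) × Finset (Fin N)) :=
    Finset.univ.filter (fun AB => Disjoint AB.1 AB.2 ∧ AB.1.card = β ∧ AB.2.card = β) with hP
  have hsub : (Finset.univ.filter (bad1 (N := N) (D := D) β)) ⊆
      P.biUnion (fun AB => Finset.univ.filter
        (fun F : Fin N × Fin N → Fin D =>
          ∀ c ∈ (AB.1 ×ˢ AB.2) ∪ (AB.2 ×ˢ AB.1), F c ≠ 0)) := by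
    intro F hF
    obtain ⟨A, B, hd, hA, hB, hne⟩ := (Finset.mem_filter.mp hF).2
    refine Finset.mem_biUnion.mpr ⟨(A, B), Finset.mem_filter.mpr ⟨Finset.mem_univ _, hd, hA, hB⟩, ?_⟩
    refine Finset.mem_filter.mpr ⟨Finset.mem_univ _, ?_⟩
    intro c hc
    rcases Finset.mem_union.mp hc with hc | hc
    · rcases Finset.mem_product.mp hc with ⟨h1, h2⟩
      have hEd := hne c.1 h1 c.2 h2
      have hne' : c.1 ≠ c.2 := fun h => Finset.disjoint_left.mp hd h1 (h ▸ h2)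
      intro h0
      exact hEd ⟨hne', Or.inl (by rw [← h0])⟩
    · rcases Finset.mem_product.mp hc with ⟨h1, h2⟩
      have hEd := hne c.2 h2 c.1 h1
      have hne' : c.2 ≠ c.1 := fun h => Finset.disjoint_left.mp hd h2 (h ▸ h1)
      intro h0
      exact hEd ⟨hne', Or.inr (by rw [← h0])⟩
  calc (Finset.univ.filter (bad1 (N := N) (D := D) β)).card
      ≤ _ := Finset.card_le_card hsub
    _ ≤ ∑ AB ∈ P, (Finset.univ.filter
        (fun F : Fin N × Fin N → Fin D =>
          ∀ c ∈ (AB.1 ×ˢ AB.2) ∪ (AB.2 ×ˢ AB.1), F c ≠ 0)).card := Finset.card_biUnion_le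
    _ ≤ ∑ _AB ∈ P, ((D - 1) ^ (2 * (β * β)) * D ^ (N * N - 2 * (β * β))) := by
        refine Finset.sum_le_sum ?_
        intro AB hAB
        obtain ⟨-, hd, hA, hB⟩ := Finset.mem_filter.mp hAB
        have hdisj : Disjoint (AB.1 ×ˢ AB.2) (AB.2 ×ˢ AB.1) := by
          rw [Finset.disjoint_left]
          intro p hp hp'
          rcases Finset.mem_product.mp hp with ⟨h1, h2⟩
          rcases Finset.mem_product.mp hp' with ⟨h1', h2'⟩
          exact Finset.disjoint_left.mp hd h1 h1'
        have hcard : ((AB.1 ×ˢ AB.2) ∪ (AB.2 ×ˢ AB.1)).card = 2 * (β * β) := by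
          rw [Finset.card_union_of_disjoint hdisj, Finset.card_product, Finset.card_product,
            hA, hB, two_mul, Nat.mul_comm β]
        rw [count_constraint _ (fun x : Fin D => x ≠ 0), card_ne_zero, hcard,
          Fintype.card_prod, Fintype.card_fin]
    _ ≤ 2 ^ N * 2 ^ N * ((D - 1) ^ (2 * (β * β)) * D ^ (N * N - 2 * (β * β))) := by
        rw [Finset.sum_const, smul_eq_mul]
        have : P.card ≤ 2 ^ N * 2 ^ N := by
          calc P.card ≤ Fintype.card (Finset (Fin N) × Finset (Fin N)) := by
                rw [← Finset.card_univ]; exact Finset.card_filter_le _ _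
            _ = 2 ^ N * 2 ^ N := by
                rw [Fintype.card_prod, Fintype.card_finset, Fintype.card_fin]
        exact Nat.mul_le_mul_right _ this

lemma count_three (c1 c2 c3 : Fin N × Fin N) (h12 : c1 ≠ c2) (h13 : c1 ≠ c3) (h23 : c2 ≠ c3) :
    (Finset.univ.filter fun F : Fin N × Fin N → Fin D =>
      F c1 = 0 ∧ F c2 = 0 ∧ F c3 = 0).card = D ^ (N * N - 3) := by
  have hset : (Finset.univ.filter fun F : Fin N × Fin N → Fin D =>
      F c1 = 0 ∧ F c2 = 0 ∧ F c3 = 0) = (Finset.univ.filter fun F : Fin N × Fin N → Fin D =>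
      ∀ c ∈ ({c1, c2, c3} : Finset (Fin N × Fin N)), F c = 0) := by
    apply Finset.filter_congr
    intro F _
    simp [Finset.mem_insert, forall_eq_or_imp]
  rw [hset, count_constraint _ (fun x : Fin D => x = 0)]
  have h3 : ({c1, c2, c3} : Finset (Fin N × Fin N)).card = 3 := by
    rw [Finset.card_insert_of_notMem (by simp [h12, h13]),
      Finset.card_insert_of_notMem (by simp [h23]), Finset.card_singleton]
  simp [h3, Fintype.card_subtype_eq, Fintype.card_prod]

lemma tri_term_bound (t : Fin N × Fin N × Fin N) :
    (Finset.univ.filter fun F : Fin N × Fin N → Fin D =>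
      t.1 ≠ t.2.1 ∧ t.2.1 ≠ t.2.2 ∧ t.1 ≠ t.2.2 ∧
      Edg F t.1 t.2.1 ∧ Edg F t.2.1 t.2.2 ∧ Edg F t.1 t.2.2).card ≤ 8 * D ^ (N * N - 3) := by
  classical
  obtain ⟨x, y, z⟩ := t
  dsimp only
  by_cases hd : x ≠ y ∧ y ≠ z ∧ x ≠ z
  · obtain ⟨hxy, hyz, hxz⟩ := hd
    have hsub : (Finset.univ.filter fun F : Fin N × Fin N → Fin D =>
        x ≠ y ∧ y ≠ z ∧ x ≠ z ∧ Edg F x y ∧ Edg F y z ∧ Edg F x z) ⊆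
        (Finset.univ : Finset (Bool × Bool × Bool)).biUnion (fun s =>
          Finset.univ.filter fun F : Fin N × Fin N → Fin D =>
            F (cond s.1 (x,y) (y,x)) = 0 ∧ F (cond s.2.1 (y,z) (z,y)) = 0 ∧
            F (cond s.2.2 (x,z) (z,x)) = 0) := by
      intro F hF
      obtain ⟨-, -, -, ⟨-, e1⟩, ⟨-, e2⟩, ⟨-, e3⟩⟩ := (Finset.mem_filter.mp hF).2
      have p1 : ∃ b : Bool, F (cond b (x,y) (y,x)) = 0 := by
        rcases e1 with h | h; exacts [⟨true, h⟩, ⟨false, h⟩]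
      have p2 : ∃ b : Bool, F (cond b (y,z) (z,y)) = 0 := by
        rcases e2 with h | h; exacts [⟨true, h⟩, ⟨false, h⟩]
      have p3 : ∃ b : Bool, F (cond b (x,z) (z,x)) = 0 := by
        rcases e3 with h | h; exacts [⟨true, h⟩, ⟨false, h⟩]
      obtain ⟨b1, h1⟩ := p1; obtain ⟨b2, h2⟩ := p2; obtain ⟨b3, h3⟩ := p3
      exact Finset.mem_biUnion.mpr ⟨(b1, b2, b3), Finset.mem_univ _,
        Finset.mem_filter.mpr ⟨Finset.mem_univ _, h1, h2, h3⟩⟩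
    calc _ ≤ _ := Finset.card_le_card hsub
      _ ≤ ∑ s ∈ (Finset.univ : Finset (Bool × Bool × Bool)),
          (Finset.univ.filter fun F : Fin N × Fin N → Fin D =>
            F (cond s.1 (x,y) (y,x)) = 0 ∧ F (cond s.2.1 (y,z) (z,y)) = 0 ∧
            F (cond s.2.2 (x,z) (z,x)) = 0).card := Finset.card_biUnion_le
      _ ≤ ∑ _s ∈ (Finset.univ : Finset (Bool × Bool × Bool)), D ^ (N * N - 3) := by
          refine Finset.sum_le_sum ?_
          intro s _
          have := count_three (D := D) (cond s.1 (x,y) (y,x)) (cond s.2.1 (y,z) (z,y))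
            (cond s.2.2 (x,z) (z,x)) ?_ ?_ ?_
          · exact this.le
          · rcases s with ⟨b1, b2, b3⟩
            cases b1 <;> cases b2 <;> simp_all [Prod.ext_iff] <;> tauto
          · rcases s with ⟨b1, b2, b3⟩
            cases b1 <;> cases b3 <;> simp_all [Prod.ext_iff] <;> tauto
          · rcases s with ⟨b1, b2, b3⟩
            cases b2 <;> cases b3 <;> simp_all [Prod.ext_iff] <;> tauto
      _ = 8 * D ^ (N * N - 3) := by
          rw [Finset.sum_const, smul_eq_mul]
          norm_num
  · have : (Finset.univ.filter fun F : Fin N × Fin N → Fin D =>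
        x ≠ y ∧ y ≠ z ∧ x ≠ z ∧ Edg F x y ∧ Edg F y z ∧ Edg F x z) = ∅ := by
      refine Finset.filter_false_of_mem ?_
      intro F _
      tauto
    rw [this]
    exact Nat.zero_le _

lemma markov_tri :
    N * (Finset.univ.filter fun F : Fin N × Fin N → Fin D =>
      N ≤ 2 * (triset F).card).card ≤ 16 * (N * N * N) * D ^ (N * N - 3) := by
  classical
  have hsum : ∑ F ∈ (Finset.univ : Finset (Fin N × Fin N → Fin D)), (triset F).card
      ≤ N * N * N * (8 * D ^ (N * N - 3)) := by
    have swap : ∑ F ∈ (Finset.univ : Finset (Fin N × Fin N → Fin D)), (triset F).card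
        = ∑ t ∈ (Finset.univ : Finset (Fin N × Fin N × Fin N)),
          (Finset.univ.filter fun F : Fin N × Fin N → Fin D =>
            t.1 ≠ t.2.1 ∧ t.2.1 ≠ t.2.2 ∧ t.1 ≠ t.2.2 ∧
            Edg F t.1 t.2.1 ∧ Edg F t.2.1 t.2.2 ∧ Edg F t.1 t.2.2).card := by
      simp only [triset, Finset.card_filter]
      rw [Finset.sum_comm]
    rw [swap]
    calc _ ≤ ∑ _t ∈ (Finset.univ : Finset (Fin N × Fin N × Fin N)), 8 * D ^ (N * N - 3) :=
          Finset.sum_le_sum (fun t _ => tri_term_bound t)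
      _ = N * N * N * (8 * D ^ (N * N - 3)) := by
          rw [Finset.sum_const, smul_eq_mul, Finset.card_univ]
          simp only [Fintype.card_prod, Fintype.card_fin]
          ring
  have hmark : N * (Finset.univ.filter fun F : Fin N × Fin N → Fin D =>
      N ≤ 2 * (triset F).card).card ≤
      ∑ F ∈ (Finset.univ : Finset (Fin N × Fin N → Fin D)), 2 * (triset F).card := by
    calc N * (Finset.univ.filter fun F : Fin N × Fin N → Fin D =>
          N ≤ 2 * (triset F).card).card
        = ∑ _F ∈ (Finset.univ.filter fun F : Fin N × Fin N → Fin D =>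
            N ≤ 2 * (triset F).card), N := by rw [Finset.sum_const, smul_eq_mul, mul_comm]
      _ ≤ ∑ F ∈ (Finset.univ.filter fun F : Fin N × Fin N → Fin D =>
            N ≤ 2 * (triset F).card), 2 * (triset F).card := by
          refine Finset.sum_le_sum ?_
          intro F hF
          exact (Finset.mem_filter.mp hF).2
      _ ≤ _ := Finset.sum_le_sum_of_subset (Finset.filter_subset _ _)
  calc _ ≤ _ := hmark
    _ = 2 * ∑ F ∈ (Finset.univ : Finset (Fin N × Fin N → Fin D)), (triset F).card := by
        rw [Finset.mul_sum]
    _ ≤ 2 * (N * N * N * (8 * D ^ (N * N - 3))) := Nat.mul_le_mul_left _ hsum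
    _ = 16 * (N * N * N) * D ^ (N * N - 3) := by ring

lemma binom2 : ∀ (n a : ℕ), a ^ (n + 1) + (n + 1) * a ^ n ≤ (a + 1) ^ (n + 1) := by
  intro n
  induction n with
  | zero => intro a; simp
  | succ n ih =>
    intro a
    calc a ^ (n + 1 + 1) + (n + 1 + 1) * a ^ (n + 1)
        ≤ a ^ (n + 2) + (n + 2) * a ^ (n + 1) + (n + 1) * a ^ n := Nat.le_add_right _ _
      _ = (a + 1) * (a ^ (n + 1) + (n + 1) * a ^ n) := by ring
      _ ≤ (a + 1) * (a + 1) ^ (n + 1) := Nat.mul_le_mul_left _ (ih a)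
      _ = (a + 1) ^ (n + 1 + 1) := by ring
lemma two_pred_pow {D : ℕ} (hD : 1 ≤ D) : 2 * (D - 1) ^ D ≤ D ^ D := by
  cases D with
  | zero => omega
  | succ d =>
    simp only [Nat.succ_sub_one]
    have h1 : d ^ (d + 1) ≤ (d + 1) * d ^ d := by
      calc d ^ (d + 1) = d * d ^ d := by ring
        _ ≤ (d + 1) * d ^ d := Nat.mul_le_mul_right _ (Nat.le_succ d)
    have h2 := binom2 d d
    linarith

lemma good_exists (N D β : ℕ) [NeZero D] (hN : 2 ≤ N) (hD : 2 ≤ D) (hE : 2 * (β * β) = 3 * (N * D))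
    (hND : 64 * (N * N) ≤ D * D * D) (h3 : 3 ≤ N * N) (hβN : 2 * (β * β) ≤ N * N) :
    ∃ F : Fin N × Fin N → Fin D, ¬ bad1 β F ∧ 2 * (triset F).card < N := by
  haveI : NeZero D := ⟨by omega⟩
  set b1 := (Finset.univ.filter (bad1 (N := N) (D := D) β)).card with hb1
  set b2 := (Finset.univ.filter fun F : Fin N × Fin N → Fin D =>
      N ≤ 2 * (triset F).card).card with hb2
  have key1 : 4 * b1 ≤ D ^ (N * N) := by
    have h4 : (4 : ℕ) ≤ 2 ^ N := by
      calc (4:ℕ) = 2 ^ 2 := by norm_num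
        _ ≤ 2 ^ N := Nat.pow_le_pow_right (by norm_num) hN
    have hcore : 2 ^ N * (2 ^ N * 2 ^ N) * (D - 1) ^ (2 * (β * β)) ≤ D ^ (2 * (β * β)) := by
      have e1 : 2 ^ N * (2 ^ N * 2 ^ N) = 8 ^ N := by
        rw [show (8:ℕ) = 2 * (2 * 2) by norm_num, Nat.mul_pow, Nat.mul_pow]
      have e2 : (2 * (D - 1) ^ D) ^ (3 * N) = 8 ^ N * (D - 1) ^ (2 * (β * β)) := by
        rw [Nat.mul_pow, ← Nat.pow_mul, hE]
        rw [show D * (3 * N) = 3 * (N * D) by ring, show (8:ℕ) = 2 ^ 3 by norm_num,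
          ← Nat.pow_mul]
      have e3 : (D ^ D) ^ (3 * N) = D ^ (2 * (β * β)) := by
        rw [← Nat.pow_mul, hE, show D * (3 * N) = 3 * (N * D) by ring]
      calc 2 ^ N * (2 ^ N * 2 ^ N) * (D - 1) ^ (2 * (β * β))
          = 8 ^ N * (D - 1) ^ (2 * (β * β)) := by rw [e1]
        _ = (2 * (D - 1) ^ D) ^ (3 * N) := e2.symm
        _ ≤ (D ^ D) ^ (3 * N) := Nat.pow_le_pow_left (two_pred_pow (by omega)) _
        _ = D ^ (2 * (β * β)) := e3
    calc 4 * b1 ≤ 2 ^ N * b1 := Nat.mul_le_mul_right _ h4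
      _ ≤ 2 ^ N * (2 ^ N * 2 ^ N * ((D - 1) ^ (2 * (β * β)) * D ^ (N * N - 2 * (β * β)))) :=
          Nat.mul_le_mul_left _ (bad1_count β)
      _ = (2 ^ N * (2 ^ N * 2 ^ N) * (D - 1) ^ (2 * (β * β))) * D ^ (N * N - 2 * (β * β)) := by
          ring
      _ ≤ D ^ (2 * (β * β)) * D ^ (N * N - 2 * (β * β)) := Nat.mul_le_mul_right _ hcore
      _ = D ^ (N * N) := by rw [← Nat.pow_add, Nat.add_sub_cancel' hβN]
  have key2 : 4 * b2 ≤ D ^ (N * N) := by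
    have hNb : N * (4 * b2) ≤ N * (64 * (N * N) * D ^ (N * N - 3)) := by
      have := markov_tri (N := N) (D := D)
      calc N * (4 * b2) = 4 * (N * b2) := by ring
        _ ≤ 4 * (16 * (N * N * N) * D ^ (N * N - 3)) := Nat.mul_le_mul_left _ this
        _ = N * (64 * (N * N) * D ^ (N * N - 3)) := by ring
    have hb2' : 4 * b2 ≤ 64 * (N * N) * D ^ (N * N - 3) :=
      Nat.le_of_mul_le_mul_left hNb (by omega)
    calc 4 * b2 ≤ 64 * (N * N) * D ^ (N * N - 3) := hb2'
      _ ≤ D * D * D * D ^ (N * N - 3) := Nat.mul_le_mul_right _ hND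
      _ = D ^ 3 * D ^ (N * N - 3) := by ring
      _ = D ^ (N * N) := by rw [← Nat.pow_add, Nat.add_sub_cancel' h3]
  by_contra hcon
  push_neg at hcon
  have hall : ∀ F : Fin N × Fin N → Fin D, bad1 β F ∨ N ≤ 2 * (triset F).card := by
    intro F
    by_cases h : bad1 β F
    · exact Or.inl h
    · exact Or.inr (le_of_not_gt fun hlt => absurd (hcon F h) (by omega))
  have huniv : (Finset.univ : Finset (Fin N × Fin N → Fin D)) ⊆
      Finset.univ.filter (fun F => bad1 β F ∨ N ≤ 2 * (triset F).card) := by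
    intro F _
    exact Finset.mem_filter.mpr ⟨Finset.mem_univ _, hall F⟩
  have hcard : D ^ (N * N) ≤ b1 + b2 := by
    calc D ^ (N * N) = Fintype.card (Fin N × Fin N → Fin D) := by
          simp [Fintype.card_fun]
      _ = (Finset.univ : Finset (Fin N × Fin N → Fin D)).card := (Finset.card_univ).symm
      _ ≤ (Finset.univ.filter (fun F => bad1 β F ∨ N ≤ 2 * (triset F).card)).card :=
          Finset.card_le_card huniv
      _ ≤ b1 + b2 := by
          rw [Finset.filter_or]
          exact le_trans (Finset.card_union_le _ _) (le_refl _)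
  have hpos : 0 < D ^ (N * N) := Nat.pow_pos (by omega)
  omega

end Graph

end P7NSEH

open P7NSEH

/-- The Paley tournament `P₇` does not have the strong EH-property. -/
theorem P7_not_strongEH : ¬ P7.StrongEH := by
  rintro ⟨c, hc, hmain⟩
  set m : ℕ := max 5 (⌈(19:ℝ)/c⌉₊ + 1) with hmdef
  have hm5 : 5 ≤ m := le_max_left _ _
  have hm0 : 0 < m := by omega
  have hmc : (19:ℝ)/c < m := by
    have h1 : (19:ℝ)/c ≤ ⌈(19:ℝ)/c⌉₊ := Nat.le_ceil _
    have h2 : (⌈(19:ℝ)/c⌉₊ + 1 : ℕ) ≤ m := le_max_right _ _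
    have h3 : ((⌈(19:ℝ)/c⌉₊ : ℝ) + 1) ≤ (m:ℝ) := by exact_mod_cast h2
    linarith
  have hc19 : (19:ℝ) < c * m := by
    rw [div_lt_iff₀ hc] at hmc
    linarith [hmc]
  have hm4 : 0 < m^4 := pow_pos hm0 4
  have hm6 : (15625 : ℕ) ≤ m^6 := by
    calc (15625:ℕ) = 5^6 := by norm_num
      _ ≤ m^6 := Nat.pow_le_pow_left hm5 6
  haveI : NeZero (6*m^4) := ⟨by omega⟩
  have hm2 : (25:ℕ) ≤ m^2 := by
    calc (25:ℕ) = 5^2 := by norm_num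
      _ ≤ m^2 := Nat.pow_le_pow_left hm5 2
  obtain ⟨F, hb1, htri⟩ := good_exists (m^6) (6*m^4) (3*m^5)
    (by omega)
    (by omega)
    (by ring)
    (by calc 64*(m^6*m^6) = 64*m^12 := by ring
          _ ≤ 216*m^12 := Nat.mul_le_mul_right _ (by norm_num)
          _ = 6*m^4*(6*m^4)*(6*m^4) := by ring)
    (by
      have : m^6 ≤ m^6 * m^6 := Nat.le_mul_of_pos_right _ (by omega)
      omega)
    (by calc 2*(3*m^5*(3*m^5)) = m^10*18 := by ring
          _ ≤ m^10*m^2 := Nat.mul_le_mul_left _ (by omega)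
          _ = m^6*m^6 := by ring)
  set del := (triset F).image (fun t => t.1) with hdel
  set R := (Finset.univ : Finset (Fin (m^6))) \ del with hR
  have hTF : ∀ x y z : Fin (m^6), x ∈ R → y ∈ R → z ∈ R → x ≠ y → y ≠ z → x ≠ z →
      Edg F x y → Edg F y z → Edg F x z → False := by
    intro x y z hx hy hz hxy hyz hxz e1 e2 e3
    have hmem : (x, y, z) ∈ triset F :=
      Finset.mem_filter.mpr ⟨Finset.mem_univ _, hxy, hyz, hxz, e1, e2, e3⟩
    have hxdel : x ∈ del := Finset.mem_image.mpr ⟨(x,y,z), hmem, rfl⟩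
    exact (Finset.mem_sdiff.mp hx).2 hxdel
  have hdelc : del.card ≤ (triset F).card := Finset.card_image_le
  have hMeq : R.card = m^6 - del.card := by
    rw [hR, Finset.card_sdiff_of_subset (Finset.subset_univ _), Finset.card_univ, Fintype.card_fin]
  have hM2 : m^6 + 1 ≤ 2 * R.card := by omega
  have hM1 : 1 < R.card := by omega
  have hfree := tourn_P7free F R (rfl : R.card = R.card) hTF
  have hpp := hmain R.card (tourn F R rfl) hfree hM1
  obtain ⟨A, B, hd, hpure, hA, hB⟩ := hpp
  have hreal : ((9*m^5 : ℕ) : ℝ) < c * R.card := by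
    have hMR : ((m:ℝ)^6 + 1) ≤ 2*(R.card:ℝ) := by exact_mod_cast hM2
    have hm0R : (0:ℝ) < (m:ℝ) := by exact_mod_cast hm0
    have h5 : (0:ℝ) < (m:ℝ)^5 := pow_pos hm0R 5
    have e1 : c*((m:ℝ)^6+1) ≤ c*(2*(R.card:ℝ)) := mul_le_mul_of_nonneg_left hMR hc.le
    have e2 : (19:ℝ)*(m:ℝ)^5 ≤ (c*(m:ℝ))*(m:ℝ)^5 :=
      mul_le_mul_of_nonneg_right hc19.le h5.le
    have e3 : (c*(m:ℝ))*(m:ℝ)^5 = c*(m:ℝ)^6 := by ring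
    push_cast
    nlinarith [h5, e1, e2]
  have hAc : 3*(3*m^5) + 1 ≤ A.card := by
    have h1 : ((9*m^5 : ℕ):ℝ) < (A.card : ℝ) := lt_of_lt_of_le hreal hA
    have h2 : 9*m^5 < A.card := by exact_mod_cast h1
    omega
  have hBc : 3*(3*m^5) + 1 ≤ B.card := by
    have h1 : ((9*m^5 : ℕ):ℝ) < (B.card : ℝ) := lt_of_lt_of_le hreal hB
    have h2 : 9*m^5 < B.card := by exact_mod_cast h1
    omega
  exact tourn_nopure F R rfl (3*m^5) hb1 hTF A B hd hpure hAc hBc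
end

section
/- If H is a tournament with the rainbow strong EH-property, then H has the strong EH-property. -/
/-- A blockade: a family of pairwise disjoint nonempty blocks. -/
def IsBlockade {n k : ℕ} (B : Fin k → Finset (Fin n)) : Prop :=
  (∀ i, (B i).Nonempty) ∧ ∀ i j : Fin k, i ≠ j → Disjoint (B i) (B j)

/-- The width of a blockade: the minimum cardinality of a block. -/
noncomputable def blockadeWidth {n k : ℕ} (B : Fin k → Finset (Fin n)) : ℕ :=
  ⨅ i, (B i).card
/-- A rainbow copy of the tournament `H` in `G` with respect to the blockade `B`:
a copy of `H` whose vertices lie in pairwise different blocks. -/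
def TRainbow {n m k : ℕ} (G : Tournament n) (H : Tournament m)
    (B : Fin k → Finset (Fin n)) : Prop :=
  ∃ f : Fin m → Fin n, Function.Injective f ∧ (∀ u v, H.adj u v ↔ G.adj (f u) (f v)) ∧
    ∃ β : Fin m → Fin k, Function.Injective β ∧ ∀ u, f u ∈ B (β u)

/-- The rainbow strong EH-property for tournaments. -/
def Tournament.RSEH {m : ℕ} (H : Tournament m) : Prop :=
  ∃ c : ℝ, 0 < c ∧ c < 1 ∧
    ∀ (n k : ℕ) (G : Tournament n) (B : Fin k → Finset (Fin n)),
      IsBlockade B → 1 / c ≤ (k : ℝ) → ¬ TRainbow G H B →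
      G.HasPurePair (c * blockadeWidth B)
/-- A tournament with the rainbow strong EH-property has the strong EH-property. -/
theorem strongEH_of_RSEH {m : ℕ} (H : Tournament m) (h : H.RSEH) : H.StrongEH := by
  obtain ⟨c, hc0, hc1, hR⟩ := h
  set k : ℕ := ⌈1/c⌉₊ with hk
  have hk0 : 0 < k := Nat.ceil_pos.mpr (by positivity)
  have hkR : (0:ℝ) < k := by exact_mod_cast hk0
  refine ⟨c / (2*k), by positivity, ?_⟩
  intro n G hfree hn
  by_cases hnk : n < k
  · -- small case: any edge gives a pure pair of order 1
    have h0 : (0:ℕ) < n := by omega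
    have h1 : (1:ℕ) < n := by omega
    set u : Fin n := ⟨0, h0⟩ with hu
    set v : Fin n := ⟨1, h1⟩ with hv
    have huv : u ≠ v := by simp [hu, hv, Fin.ext_iff]
    have hbound : c / (2*k) * n ≤ 1 := by
      have hnle : (n:ℝ) ≤ k := by exact_mod_cast hnk.le
      rw [div_mul_eq_mul_div, div_le_one (by positivity)]
      nlinarith
    rcases Classical.em (G.adj u v) with ha | ha
    · exact ⟨{u}, {v}, by simp [hu, hv, Fin.ext_iff], by simpa using ha,
        by simpa using hbound, by simpa using hbound⟩
    · have hb : G.adj v u := by have := G.total u v huv; tauto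
      exact ⟨{v}, {u}, by simp [hu, hv, Fin.ext_iff], by simpa using hb,
        by simpa using hbound, by simpa using hbound⟩
  · push_neg at hnk
    set q : ℕ := n / k with hq
    have hq1 : 1 ≤ q := (Nat.one_le_div_iff hk0).mpr hnk
    have hkq : k * q ≤ n := by
      rw [hq, mul_comm]; exact Nat.div_mul_le_self n k
    have hb : ∀ i : Fin k, ∀ x ∈ Finset.Ico ((i:ℕ)*q) (((i:ℕ)+1)*q), x < n := by
      intro i x hx
      rw [Finset.mem_Ico] at hx
      have h2 : ((i:ℕ)+1)*q ≤ k*q := Nat.mul_le_mul_right _ i.isLt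
      omega
    set B : Fin k → Finset (Fin n) :=
      fun i => (Finset.Ico ((i:ℕ)*q) (((i:ℕ)+1)*q)).attachFin (hb i) with hB
    have hcard : ∀ i, (B i).card = q := by
      intro i
      rw [hB]
      simp only [Finset.card_attachFin, Nat.card_Ico]
      rw [add_mul, one_mul, Nat.add_sub_cancel_left]
    have hne : ∀ i, (B i).Nonempty := fun i =>
      Finset.card_pos.mp (by rw [hcard i]; omega)
    have hdis : ∀ i j : Fin k, i ≠ j → Disjoint (B i) (B j) := by
      intro i j hij
      rw [Finset.disjoint_left]
      intro x hxi hxj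
      simp only [hB, Finset.mem_attachFin, Finset.mem_Ico] at hxi hxj
      rcases lt_or_gt_of_ne hij with hlt | hlt
      · have h2 : ((i:ℕ)+1)*q ≤ (j:ℕ)*q := Nat.mul_le_mul_right _ hlt
        omega
      · have h2 : ((j:ℕ)+1)*q ≤ (i:ℕ)*q := Nat.mul_le_mul_right _ hlt
        omega
    have hNE : Nonempty (Fin k) := ⟨⟨0, hk0⟩⟩
    have hW : blockadeWidth B = q := by
      rw [blockadeWidth]
      simp only [hcard]
      exact ciInf_const
    have hnr : ¬ TRainbow G H B := by
      rintro ⟨f, hf, hadj, -⟩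
      exact hfree ⟨f, hf, hadj⟩
    have hPP := hR n k G B ⟨hne, hdis⟩ (by rw [hk]; exact Nat.le_ceil _) hnr
    rw [hW] at hPP
    have hn2 : n ≤ 2 * (k * q) := by
      have h1 : k * q + n % k = n := by rw [hq]; exact Nat.div_add_mod n k
      have h2 : n % k < k := Nat.mod_lt n hk0
      have h3 : k ≤ k * q := Nat.le_mul_of_pos_right k hq1
      linarith
    have hle : c / (2*k) * n ≤ c * q := by
      have hn2' : (n:ℝ) ≤ 2*((k:ℝ)*(q:ℝ)) := by exact_mod_cast hn2
      rw [div_mul_eq_mul_div, div_le_iff₀ (by positivity)]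
      nlinarith [hc0.le]
    obtain ⟨A, Bb, hd, hab, h3, h4⟩ := hPP
    exact ⟨A, Bb, hd, hab, le_trans hle h3, le_trans hle h4⟩
end
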